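/- arXiv:2103.02430 — 3 statements merged into one kernel-verified Lean document; each statement's English description precedes it below -/
import Mathlib

section
/- Let D be a finite subset of ℝ^n × ℝ^n and suppose that dom H_D + R_-(H_D) = ℝ^n, where R_-(H_D) is the reachable set of the minimal linear process associated with H_D. Then H_D is reachable if and only if every convex process H ∈ Σ_D is reachable. -/
open Matrix Set Pointwise

/-- A set-valued map from `ℝ^n` to subsets of `ℝ^n`. -/
abbrev SVMap (n : ℕ) := (Fin n → ℝ) → Set (Fin n → ℝ)

/-- The graph of a set-valued map. -/
def graphOf {n : ℕ} (H : SVMap n) : Set ((Fin n → ℝ) × (Fin n → ℝ)) :=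
  {p | p.2 ∈ H p.1}

/-- The set-valued map associated with a graph. -/
def ofGraph {n : ℕ} (G : Set ((Fin n → ℝ) × (Fin n → ℝ))) : SVMap n :=
  fun x => {y | (x, y) ∈ G}

/-- A convex cone: a nonempty convex set closed under nonnegative scalar multiplication. -/
def IsConvexCone {V : Type*} [AddCommGroup V] [Module ℝ V] (C : Set V) : Prop :=
  C.Nonempty ∧ Convex ℝ C ∧ ∀ c : ℝ, 0 ≤ c → ∀ x ∈ C, c • x ∈ C

/-- A convex process: a set-valued map whose graph is a convex cone. -/
def IsConvexProcess {n : ℕ} (H : SVMap n) : Prop :=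
  IsConvexCone (graphOf H)

/-- A linear process: a set-valued map whose graph is a linear subspace. -/
def IsLinearProcess {n : ℕ} (H : SVMap n) : Prop :=
  ∃ S : Submodule ℝ ((Fin n → ℝ) × (Fin n → ℝ)), graphOf H = (S : Set _)

/-- The domain of a set-valued map. -/
def domOf {n : ℕ} (H : SVMap n) : Set (Fin n → ℝ) := {x | (H x).Nonempty}

/-- The image of a set-valued map. -/
def imOf {n : ℕ} (H : SVMap n) : Set (Fin n → ℝ) := {y | ∃ x, y ∈ H x}

/-- The reachable set: states reachable from the origin by a finite trajectory. -/
def reachSet {n : ℕ} (H : SVMap n) : Set (Fin n → ℝ) :=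
  {ξ | ∃ (q : ℕ) (x : ℕ → (Fin n → ℝ)),
    x 0 = 0 ∧ x q = ξ ∧ ∀ k, k < q → x (k + 1) ∈ H (x k)}

/-- The null-controllable set: states steered to the origin by a finite trajectory. -/
def nullSet {n : ℕ} (H : SVMap n) : Set (Fin n → ℝ) :=
  {ξ | ∃ (q : ℕ) (x : ℕ → (Fin n → ℝ)),
    x 0 = ξ ∧ x q = 0 ∧ ∀ k, k < q → x (k + 1) ∈ H (x k)}

/-- The feasible set: states from which an infinite trajectory emanates. -/
def feasSet {n : ℕ} (H : SVMap n) : Set (Fin n → ℝ) :=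
  {ξ | ∃ x : ℕ → (Fin n → ℝ), x 0 = ξ ∧ ∀ k, x (k + 1) ∈ H (x k)}

/-- `H` is reachable if every feasible state is reachable. -/
def IsReachable {n : ℕ} (H : SVMap n) : Prop := feasSet H ⊆ reachSet H

/-- `H` is null-controllable if every feasible state is null-controllable. -/
def IsNullControllable {n : ℕ} (H : SVMap n) : Prop := feasSet H ⊆ nullSet H

/-- The minimal linear process `L_-` associated with `H`: graph `L_- = lin(graph H) = (-graph H) ∩ graph H`. -/
def Lminus {n : ℕ} (H : SVMap n) : SVMap n := ofGraph ((-(graphOf H)) ∩ graphOf H)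

/-- The maximal linear process `L_+` associated with `H`: graph `L_+ = Lin(graph H) = graph H - graph H`. -/
def Lplus {n : ℕ} (H : SVMap n) : SVMap n := ofGraph (graphOf H - graphOf H)

/-- The negative dual process: `p ∈ H^-(q)` iff `⟨p,x⟩ ≥ ⟨q,y⟩` for all `(x,y) ∈ graph H`. -/
def dualNeg {n : ℕ} (H : SVMap n) : SVMap n :=
  fun q => {p | ∀ x y, y ∈ H x → q ⬝ᵥ y ≤ p ⬝ᵥ x}

/-- The positive dual process: `p ∈ H^+(q)` iff `⟨p,x⟩ ≤ ⟨q,y⟩` for all `(x,y) ∈ graph H`. -/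
def dualPos {n : ℕ} (H : SVMap n) : SVMap n :=
  fun q => {p | ∀ x y, y ∈ H x → p ⬝ᵥ x ≤ q ⬝ᵥ y}

/-- `(lam, ξ)` is an eigenpair of `G` if `ξ ≠ 0` and `lam • ξ ∈ G(ξ)`. -/
def IsEigenpair {n : ℕ} (G : SVMap n) (lam : ℝ) (ξ : Fin n → ℝ) : Prop :=
  ξ ≠ 0 ∧ lam • ξ ∈ G ξ

/-- The conic hull: all conic (nonnegative) combinations of elements of `S`. -/
def coneHull {V : Type*} [AddCommGroup V] [Module ℝ V] (S : Set V) : Set V :=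
  {x | ∃ (k : ℕ) (c : Fin k → ℝ) (f : Fin k → V),
    (∀ i, 0 ≤ c i) ∧ (∀ i, f i ∈ S) ∧ x = ∑ i, c i • f i}

/-- The most powerful unfalsified process `H_D`: the convex process with graph `cone D`. -/
def mpup {n : ℕ} (D : Set ((Fin n → ℝ) × (Fin n → ℝ))) : SVMap n := ofGraph (coneHull D)

/-- The inner product on `ℝ^n × ℝ^n`. -/
def pairDot {n : ℕ} (p q : (Fin n → ℝ) × (Fin n → ℝ)) : ℝ := p.1 ⬝ᵥ q.1 + p.2 ⬝ᵥ q.2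

/-- The positive polar cone of a subset of `ℝ^n × ℝ^n`. -/
def polarPos {n : ℕ} (C : Set ((Fin n → ℝ) × (Fin n → ℝ))) :
    Set ((Fin n → ℝ) × (Fin n → ℝ)) :=
  {η | ∀ d ∈ C, 0 ≤ pairDot d η}

/-- The negative polar cone of a subset of `ℝ^n × ℝ^n`. -/
def polarNeg {n : ℕ} (C : Set ((Fin n → ℝ) × (Fin n → ℝ))) :
    Set ((Fin n → ℝ) × (Fin n → ℝ)) :=
  {η | ∀ d ∈ C, pairDot d η ≤ 0}

/-- The data set `D = {(x_t, y_t)}` whose elements are the column pairs of `X` and `Y`. -/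
def colPairs {n T : ℕ} (X Y : Matrix (Fin n) (Fin T) ℝ) :
    Set ((Fin n → ℝ) × (Fin n → ℝ)) :=
  {p | ∃ t : Fin T, p = (fun i => X i t, fun i => Y i t)}

/-- The rows of the matrix `[Z −W]`, viewed as pairs `(z_i, -w_i)` in `ℝ^n × ℝ^n`. -/
def rowPairsZW {m n : ℕ} (Z W : Matrix (Fin m) (Fin n) ℝ) :
    Set ((Fin n → ℝ) × (Fin n → ℝ)) :=
  {p | ∃ i : Fin m, p = (fun j => Z i j, fun j => -W i j)}

/-- `X ℝ_+^T`: the image of the nonnegative orthant under `X`. -/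
def posImage {n T : ℕ} (X : Matrix (Fin n) (Fin T) ℝ) : Set (Fin n → ℝ) :=
  {x | ∃ v : Fin T → ℝ, (∀ t, 0 ≤ v t) ∧ x = X *ᵥ v}

/-- The set-valued map `S ↦ W^{-1}(Z S)`. -/
def mapWiZ {m n : ℕ} (Z W : Matrix (Fin m) (Fin n) ℝ) :
    Set (Fin n → ℝ) → Set (Fin n → ℝ) :=
  fun S => {y | ∃ x ∈ S, W *ᵥ y = Z *ᵥ x}

/-- The set-valued map `S ↦ Z^{-1}(W S)`. -/
def mapZiW {m n : ℕ} (Z W : Matrix (Fin m) (Fin n) ℝ) :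
    Set (Fin n → ℝ) → Set (Fin n → ℝ) :=
  fun S => {y | ∃ x ∈ S, Z *ᵥ y = W *ᵥ x}

/-- The set-valued map `S ↦ Y(X^{-1} S)`. -/
def mapYXi {n T : ℕ} (X Y : Matrix (Fin n) (Fin T) ℝ) :
    Set (Fin n → ℝ) → Set (Fin n → ℝ) :=
  fun S => {y | ∃ v : Fin T → ℝ, X *ᵥ v ∈ S ∧ y = Y *ᵥ v}

/-- The set-valued map `S ↦ X(Y^{-1} S)`. -/
def mapXYi {n T : ℕ} (X Y : Matrix (Fin n) (Fin T) ℝ) :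
    Set (Fin n → ℝ) → Set (Fin n → ℝ) :=
  fun S => {y | ∃ v : Fin T → ℝ, Y *ᵥ v ∈ S ∧ y = X *ᵥ v}

/-- The image of a set under a set-valued map. -/
def imageSV {n : ℕ} (H : SVMap n) (S : Set (Fin n → ℝ)) : Set (Fin n → ℝ) :=
  {y | ∃ x ∈ S, y ∈ H x}

/-- The inverse of a set-valued map. -/
def invSV {n : ℕ} (H : SVMap n) : SVMap n := fun y => {x | y ∈ H x}

/-- The linear map `(a, b) ↦ (b, -a)` on `ℝ^n × ℝ^n`. -/
def flipMap {n : ℕ} : ((Fin n → ℝ) × (Fin n → ℝ)) → ((Fin n → ℝ) × (Fin n → ℝ)) :=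
  fun p => (p.2, -p.1)

/-- The orthogonal complement of a subset of `ℝ^n × ℝ^n`. -/
def orthPair {n : ℕ} (C : Set ((Fin n → ℝ) × (Fin n → ℝ))) :
    Set ((Fin n → ℝ) × (Fin n → ℝ)) :=
  {q | ∀ p ∈ C, pairDot p q = 0}

/-- The dual linear process `L^⊥`, with graph `{(b, -a) : (a, b) ∈ (graph L)^⊥}`. -/
def perpProcess {n : ℕ} (L : SVMap n) : SVMap n :=
  ofGraph (flipMap '' orthPair (graphOf L))

/-- The orthogonal complement of a subset of `ℝ^n`. -/
def orthVec {n : ℕ} (S : Set (Fin n → ℝ)) : Set (Fin n → ℝ) :=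
  {x | ∀ y ∈ S, x ⬝ᵥ y = 0}


/-! ### Auxiliary development -/

section Aux

variable {n : ℕ}

lemma graphOf_ofGraph (S : Set ((Fin n → ℝ) × (Fin n → ℝ))) : graphOf (ofGraph S) = S := rfl

lemma mem_graphOf {H : SVMap n} {p : (Fin n → ℝ) × (Fin n → ℝ)} :
    p ∈ graphOf H ↔ p.2 ∈ H p.1 := Iff.rfl

lemma cc_zero {V : Type*} [AddCommGroup V] [Module ℝ V] {C : Set V}
    (h : IsConvexCone C) : (0 : V) ∈ C := by
  obtain ⟨x, hx⟩ := h.1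
  simpa using h.2.2 0 le_rfl x hx

lemma cc_add {V : Type*} [AddCommGroup V] [Module ℝ V] {C : Set V}
    (h : IsConvexCone C) {a b : V} (ha : a ∈ C) (hb : b ∈ C) : a + b ∈ C := by
  have h2 := h.2.1 ha hb (by norm_num : (0:ℝ) ≤ 1/2) (by norm_num : (0:ℝ) ≤ 1/2) (by norm_num)
  have := h.2.2 2 (by norm_num) _ h2
  rw [smul_add, smul_smul, smul_smul] at this
  norm_num at this
  exact this

/-- The "lineality" part of the graph of `H`. -/
def linOf (H : SVMap n) : Set ((Fin n → ℝ) × (Fin n → ℝ)) := (-(graphOf H)) ∩ graphOf H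

lemma graphOf_Lminus (H : SVMap n) : graphOf (Lminus H) = linOf H := rfl

lemma linOf_subset (H : SVMap n) : linOf H ⊆ graphOf H := Set.inter_subset_right

lemma lin_zero {H : SVMap n} (hH : IsConvexProcess H) : (0 : (Fin n → ℝ) × (Fin n → ℝ)) ∈ linOf H :=
  ⟨by simpa using cc_zero hH, cc_zero hH⟩

lemma lin_add {H : SVMap n} (hH : IsConvexProcess H) {a b : (Fin n → ℝ) × (Fin n → ℝ)}
    (ha : a ∈ linOf H) (hb : b ∈ linOf H) : a + b ∈ linOf H := by
  refine ⟨?_, cc_add hH ha.2 hb.2⟩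
  rw [Set.mem_neg] at *
  have := cc_add hH hb.1 ha.1
  simpa [neg_add] using this

lemma lin_smul {H : SVMap n} (hH : IsConvexProcess H) (c : ℝ) {a : (Fin n → ℝ) × (Fin n → ℝ)}
    (ha : a ∈ linOf H) : c • a ∈ linOf H := by
  rcases le_or_gt 0 c with hc | hc
  · refine ⟨?_, hH.2.2 c hc a ha.2⟩
    rw [Set.mem_neg, ← smul_neg]
    exact hH.2.2 c hc _ (Set.mem_neg.mp ha.1)
  · have hc' : 0 ≤ -c := by linarith
    constructor
    · rw [Set.mem_neg, ← neg_smul]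
      exact hH.2.2 (-c) hc' a ha.2
    · have : c • a = (-c) • (-a) := by simp
      rw [this]
      exact hH.2.2 (-c) hc' _ (Set.mem_neg.mp ha.1)

lemma lin_neg {H : SVMap n} (hH : IsConvexProcess H) {a : (Fin n → ℝ) × (Fin n → ℝ)}
    (ha : a ∈ linOf H) : -a ∈ linOf H := by
  simpa using lin_smul hH (-1) ha

lemma graph_sub_lin {H : SVMap n} (hH : IsConvexProcess H) {a b : (Fin n → ℝ) × (Fin n → ℝ)}
    (ha : a ∈ graphOf H) (hb : b ∈ linOf H) : a - b ∈ graphOf H := by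
  have : -b ∈ graphOf H := linOf_subset H (lin_neg hH hb)
  simpa [sub_eq_add_neg] using cc_add hH ha this

/-- Padding a finite trajectory with zeros at the front. -/
lemma traj_pad {K : SVMap n} (h0 : ((0 : Fin n → ℝ), (0 : Fin n → ℝ)) ∈ graphOf K)
    {ξ : Fin n → ℝ} {q : ℕ}
    (h : ∃ x : ℕ → (Fin n → ℝ), x 0 = 0 ∧ x q = ξ ∧ ∀ k, k < q → x (k + 1) ∈ K (x k))
    {q' : ℕ} (hq : q ≤ q') :
    ∃ x : ℕ → (Fin n → ℝ), x 0 = 0 ∧ x q' = ξ ∧ ∀ k, k < q' → x (k + 1) ∈ K (x k) := by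
  obtain ⟨x, hx0, hxq, hstep⟩ := h
  refine ⟨fun j => x (j - (q' - q)), by simpa using hx0, by
    show x (q' - (q' - q)) = ξ
    rw [show q' - (q' - q) = q by omega]; exact hxq, ?_⟩
  intro k hk
  show x (k + 1 - (q' - q)) ∈ K (x (k - (q' - q)))
  by_cases hkc : k < q' - q
  · have e1 : k - (q' - q) = 0 := by omega
    have e2 : k + 1 - (q' - q) = 0 := by omega
    rw [e1, e2, hx0]
    exact h0
  · have e : k + 1 - (q' - q) = (k - (q' - q)) + 1 := by omega
    rw [e]
    exact hstep _ (by omega)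

lemma zero_mem_reachSet {K : SVMap n} : (0 : Fin n → ℝ) ∈ reachSet K :=
  ⟨0, fun _ => 0, rfl, rfl, fun k hk => absurd hk (Nat.not_lt_zero k)⟩

lemma reachSet_add {K : SVMap n}
    (h0 : ((0 : Fin n → ℝ), (0 : Fin n → ℝ)) ∈ graphOf K)
    (hadd : ∀ a b : (Fin n → ℝ) × (Fin n → ℝ), a ∈ graphOf K → b ∈ graphOf K → a + b ∈ graphOf K)
    {ξ η : Fin n → ℝ} (hξ : ξ ∈ reachSet K) (hη : η ∈ reachSet K) :
    ξ + η ∈ reachSet K := by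
  obtain ⟨q1, hx⟩ := hξ
  obtain ⟨q2, hy⟩ := hη
  obtain ⟨x, hx0, hxq, hxs⟩ := traj_pad h0 hx (le_max_left q1 q2)
  obtain ⟨y, hy0, hyq, hys⟩ := traj_pad h0 hy (le_max_right q1 q2)
  refine ⟨max q1 q2, fun j => x j + y j, by simp [hx0, hy0], by simp [hxq, hyq], ?_⟩
  intro k hk
  exact hadd (x k, x (k+1)) (y k, y (k+1)) (hxs k hk) (hys k hk)

lemma reachSet_mono {K K' : SVMap n} (h : graphOf K ⊆ graphOf K') :
    reachSet K ⊆ reachSet K' := by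
  rintro ξ ⟨q, x, hx0, hxq, hs⟩
  exact ⟨q, x, hx0, hxq, fun k hk => h (show (x k, x (k+1)) ∈ graphOf K from hs k hk)⟩

end Aux

section Key

variable {n : ℕ} {H : SVMap n} (hH : IsConvexProcess H)

/-- The `p`-step reachable set of the minimal linear process, as a submodule. -/
def VpSub (H : SVMap n) (hH : IsConvexProcess H) (p : ℕ) : Submodule ℝ (Fin n → ℝ) where
  carrier := {ξ | ∃ x : ℕ → (Fin n → ℝ), x 0 = 0 ∧ x p = ξ ∧
    ∀ k, k < p → (x k, x (k + 1)) ∈ linOf H}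
  zero_mem' := ⟨fun _ => 0, rfl, rfl, fun k _ => by simpa [Prod.mk_zero_zero] using lin_zero hH⟩
  add_mem' := by
    rintro a b ⟨x, hx0, hxp, hxs⟩ ⟨y, hy0, hyp, hys⟩
    refine ⟨fun j => x j + y j, by simp [hx0, hy0], by simp [hxp, hyp], ?_⟩
    intro k hk
    exact lin_add hH (hxs k hk) (hys k hk)
  smul_mem' := by
    rintro c a ⟨x, hx0, hxp, hxs⟩
    refine ⟨fun j => c • x j, by simp [hx0], by simp [hxp], ?_⟩
    intro k hk
    have := lin_smul hH c (hxs k hk)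
    simpa [Prod.smul_mk] using this

lemma mem_VpSub_iff_V {ξ : Fin n → ℝ} :
    ξ ∈ reachSet (Lminus H) ↔ ∃ p, ξ ∈ VpSub H hH p := by
  constructor
  · rintro ⟨q, x, hx0, hxq, hs⟩
    exact ⟨q, x, hx0, hxq, fun k hk => hs k hk⟩
  · rintro ⟨p, x, hx0, hxp, hs⟩
    exact ⟨p, x, hx0, hxp, fun k hk => hs k hk⟩

lemma VpSub_mono {p p' : ℕ} (hp : p ≤ p') : VpSub H hH p ≤ VpSub H hH p' := by
  intro ξ hξ
  exact traj_pad (K := Lminus H) (lin_zero hH) hξ hp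

/-- The reachable set of the minimal linear process, as a submodule. -/
def RminSub (H : SVMap n) (hH : IsConvexProcess H) : Submodule ℝ (Fin n → ℝ) where
  carrier := reachSet (Lminus H)
  zero_mem' := zero_mem_reachSet
  add_mem' := fun ha hb => reachSet_add
    (show ((0 : Fin n → ℝ), (0 : Fin n → ℝ)) ∈ graphOf (Lminus H) from lin_zero hH)
    (fun a b => lin_add hH) ha hb
  smul_mem' := by
    intro c ξ hξ
    rw [mem_VpSub_iff_V hH] at *
    obtain ⟨p, hp⟩ := hξ
    exact ⟨p, (VpSub H hH p).smul_mem c hp⟩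

/-- A uniform bound on the number of steps needed to reach any element of `R₋(H)`. -/
lemma exists_uniform_N :
    ∃ N : ℕ, ∀ ξ ∈ reachSet (Lminus H), ξ ∈ VpSub H hH N := by
  classical
  obtain ⟨s, hs⟩ := IsNoetherian.noetherian (RminSub H hH)
  set plen : (Fin n → ℝ) → ℕ := fun v =>
    if h : ∃ p, v ∈ VpSub H hH p then h.choose else 0 with hplen
  refine ⟨s.sup plen, ?_⟩
  intro ξ hξ
  have hle : RminSub H hH ≤ VpSub H hH (s.sup plen) := by
    rw [← hs, Submodule.span_le]
    intro v hv
    have hvV : v ∈ RminSub H hH := by rw [← hs]; exact Submodule.subset_span hv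
    have hex : ∃ p, v ∈ VpSub H hH p := (mem_VpSub_iff_V hH).mp hvV
    have hv1 : v ∈ VpSub H hH (plen v) := by
      rw [hplen]; simp only [dif_pos hex]; exact hex.choose_spec
    exact VpSub_mono hH (Finset.le_sup hv) hv1
  exact hle hξ

end Key


section Main

/-- A convex process, whose graph is the "lineality" subspace of `H`. -/
def linSub {n : ℕ} (H : SVMap n) (hH : IsConvexProcess H) :
    Submodule ℝ ((Fin n → ℝ) × (Fin n → ℝ)) where
  carrier := linOf H
  zero_mem' := lin_zero hH
  add_mem' := fun ha hb => lin_add hH ha hb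
  smul_mem' := fun c a ha => lin_smul hH c ha

/-- Key lemma: a reachable convex process with `dom H + R₋(H) = ℝⁿ` has full reachable set. -/
lemma key_reach {n : ℕ} (H : SVMap n) (hH : IsConvexProcess H)
    (hdom : domOf H + reachSet (Lminus H) = Set.univ)
    (hreach : IsReachable H) : reachSet H = Set.univ := by
  classical
  have hVR : reachSet (Lminus H) ⊆ reachSet H :=
    reachSet_mono (show graphOf (Lminus H) ⊆ graphOf H from linOf_subset H)
  have h00 : ((0 : Fin n → ℝ), (0 : Fin n → ℝ)) ∈ graphOf H := cc_zero hH
  have hRadd : ∀ a b : Fin n → ℝ, a ∈ reachSet H → b ∈ reachSet H → a + b ∈ reachSet H :=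
    fun a b ha hb => reachSet_add h00 (fun p q hp hq => cc_add hH hp hq) ha hb
  have hdec : ∀ y : Fin n → ℝ, ∃ a ∈ domOf H, ∃ b ∈ reachSet (Lminus H), a + b = y := by
    intro y
    have : y ∈ domOf H + reachSet (Lminus H) := by rw [hdom]; exact Set.mem_univ y
    exact Set.mem_add.mp this
  suffices hds : domOf H ⊆ reachSet H by
    ext ξ
    simp only [Set.mem_univ, iff_true]
    obtain ⟨a, ha, b, hb, hab⟩ := hdec ξ
    exact hab ▸ hRadd a b (hds ha) (hVR hb)
  intro d₀ hd₀
  -- one-step decomposed successor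
  have step : ∀ v, v ∈ domOf H → ∃ a b, a ∈ domOf H ∧ b ∈ reachSet (Lminus H) ∧ a + b ∈ H v := by
    intro v hv
    obtain ⟨y, hy⟩ := hv
    obtain ⟨a, ha, b, hb, hab⟩ := hdec y
    exact ⟨a, b, ha, hb, by rw [hab]; exact hy⟩
  choose nd nr hnd hnr hnmem using step
  -- the sequence of domain points and lineality corrections
  let f : ℕ → {v : Fin n → ℝ // v ∈ domOf H} := fun k =>
    Nat.rec ⟨d₀, hd₀⟩ (fun _ p => ⟨nd p.1 p.2, hnd p.1 p.2⟩) k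
  let d : ℕ → Fin n → ℝ := fun k => (f k).1
  let r : ℕ → Fin n → ℝ := fun k => Nat.rec 0 (fun j _ => nr (f j).1 (f j).2) k
  have hd0 : d 0 = d₀ := rfl
  have hrV : ∀ k, r k ∈ reachSet (Lminus H) := by
    intro k
    cases k with
    | zero => exact zero_mem_reachSet
    | succ j => exact hnr (f j).1 (f j).2
  have hkey : ∀ k, (d k, d (k + 1) + r (k + 1)) ∈ graphOf H := by
    intro k
    exact hnmem (f k).1 (f k).2
  obtain ⟨N, hN⟩ := exists_uniform_N hH
  -- uniform-length lineality trajectories realizing each `r k`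
  have hVN : ∀ k, ∃ z : ℕ → Fin n → ℝ, z 0 = 0 ∧ z N = r k ∧
      (∀ j, j < N → (z j, z (j + 1)) ∈ linOf H) ∧ ∀ j, z j ∈ reachSet (Lminus H) := by
    intro k
    have hmem : r k ∈ VpSub H hH N := hN (r k) (hrV k)
    obtain ⟨z, hz0, hzN, hzs⟩ := hmem
    refine ⟨fun j => z (min j N), by simp [hz0], by simp [hzN], ?_, ?_⟩
    · intro j hj
      have e1 : min j N = j := by omega
      have e2 : min (j + 1) N = j + 1 := by omega
      show (z (min j N), z (min (j + 1) N)) ∈ linOf H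
      rw [e1, e2]
      exact hzs j hj
    · intro j
      exact ⟨min j N, z, hz0, rfl, fun k hk =>
        show (z k, z (k+1)) ∈ linOf H from hzs k (by omega)⟩
  choose Z hZ0 hZN hZstep hZV using hVN
  -- corrections
  let ζ : ℕ → ℕ → Fin n → ℝ := fun k j => if k ≤ j + N then Z k (j + N - k) else 0
  have hζdef : ∀ k j, ζ k j = if k ≤ j + N then Z k (j + N - k) else 0 := fun _ _ => rfl
  let c : ℕ → Fin n → ℝ := fun j => ∑ k ∈ Finset.Icc (j + 1) (j + N), ζ k j
  have hcdef : ∀ j, c j = ∑ k ∈ Finset.Icc (j + 1) (j + N), ζ k j := fun _ => rfl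
  have hζdiag : ∀ k, ζ k k = r k := by
    intro k
    rw [hζdef, if_pos (Nat.le_add_right k N), Nat.add_sub_cancel_left]
    exact hZN k
  have hζstep : ∀ k j, j < k → (ζ k j, ζ k (j + 1)) ∈ linOf H := by
    intro k j hjk
    by_cases h1 : k ≤ j + N
    · have h2 : k ≤ j + 1 + N := by omega
      have e : j + 1 + N - k = (j + N - k) + 1 := by omega
      rw [hζdef, hζdef, if_pos h1, if_pos h2, e]
      exact hZstep k _ (by omega)
    · by_cases h2 : k ≤ j + 1 + N
      · have e : j + 1 + N - k = 0 := by omega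
        rw [hζdef, hζdef, if_neg h1, if_pos h2, e, hZ0]
        exact lin_zero hH
      · rw [hζdef, hζdef, if_neg h1, if_neg h2]
        exact lin_zero hH
  have hc0V : c 0 ∈ reachSet (Lminus H) := by
    rw [hcdef]
    refine Submodule.sum_mem (RminSub H hH) ?_
    intro k hk
    rw [hζdef]
    split
    · exact hZV k _
    · exact (RminSub H hH).zero_mem
  -- the corrected pair is in the lineality space
  have hlinpair : ∀ j, (c j, c (j + 1) + r (j + 1)) ∈ linOf H := by
    intro j
    have e1 : (∑ k ∈ Finset.Icc (j + 1) (j + N + 1), ζ k j) = c j := by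
      rw [Finset.sum_Icc_succ_top (by omega : j + 1 ≤ j + N + 1)]
      have hz : ζ (j + N + 1) j = 0 := by
        rw [hζdef, if_neg (by omega)]
      rw [hz, add_zero, hcdef]
    have e2 : (∑ k ∈ Finset.Icc (j + 1) (j + N + 1), ζ k (j + 1)) = c (j + 1) + r (j + 1) := by
      have hins : Finset.Icc (j + 1) (j + N + 1) = insert (j + 1) (Finset.Icc (j + 2) (j + N + 1)) := by
        ext m
        simp only [Finset.mem_Icc, Finset.mem_insert]
        omega
      rw [hins, Finset.sum_insert (by simp only [Finset.mem_Icc]; omega), hζdiag (j + 1)]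
      have hIcc : Finset.Icc (j + 2) (j + N + 1) = Finset.Icc (j + 1 + 1) (j + 1 + N) := by
        congr 1
        omega
      rw [hIcc, ← hcdef (j + 1), add_comm]
    have epair : (c j, c (j + 1) + r (j + 1)) =
        ∑ k ∈ Finset.Icc (j + 1) (j + N + 1), (ζ k j, ζ k (j + 1)) := by
      rw [← e1, ← e2]
      exact Prod.ext (by rw [Prod.fst_sum]) (by rw [Prod.snd_sum])
    rw [epair]
    exact Submodule.sum_mem (linSub H hH) fun k hk =>
      hζstep k j (by have := (Finset.mem_Icc.mp hk).1; omega)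
  -- the feasible trajectory
  let x : ℕ → Fin n → ℝ := fun j => d j - c j
  have hxdef : ∀ j, x j = d j - c j := fun _ => rfl
  have hstep' : ∀ j, x (j + 1) ∈ H (x j) := by
    intro j
    have hmem := graph_sub_lin hH (hkey j) (hlinpair j)
    have e : (d j, d (j + 1) + r (j + 1)) - (c j, c (j + 1) + r (j + 1)) = (x j, x (j + 1)) := by
      rw [Prod.mk_sub_mk, hxdef j, hxdef (j + 1)]
      congr 1
      abel
    rw [e] at hmem
    exact hmem
  have hx0R : x 0 ∈ reachSet H := hreach ⟨x, rfl, hstep'⟩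
  have hd0R : d 0 ∈ reachSet H := by
    have e : d 0 = x 0 + c 0 := by rw [hxdef]; abel
    rw [e]
    exact hRadd _ _ hx0R (hVR hc0V)
  rw [hd0] at hd0R
  exact hd0R

lemma coneHull_isConvexCone {n : ℕ} (D : Set ((Fin n → ℝ) × (Fin n → ℝ))) :
    IsConvexCone (coneHull D) := by
  have hzero : (0 : (Fin n → ℝ) × (Fin n → ℝ)) ∈ coneHull D :=
    ⟨0, fun i => 0, fun i => i.elim0, fun i => le_rfl, fun i => i.elim0, by simp⟩
  have hsmul : ∀ c : ℝ, 0 ≤ c → ∀ x ∈ coneHull D, c • x ∈ coneHull D := by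
    rintro c hc x ⟨k, co, g, hco, hg, rfl⟩
    exact ⟨k, fun i => c * co i, g, fun i => mul_nonneg hc (hco i), hg, by
      rw [Finset.smul_sum]; simp [smul_smul]⟩
  have hadd : ∀ x ∈ coneHull D, ∀ y ∈ coneHull D, x + y ∈ coneHull D := by
    rintro x ⟨k1, c1, g1, hc1, hg1, rfl⟩ y ⟨k2, c2, g2, hc2, hg2, rfl⟩
    refine ⟨k1 + k2, Fin.append c1 c2, Fin.append g1 g2, ?_, ?_, ?_⟩
    · intro i
      rcases lt_or_ge (i : ℕ) k1 with h | h
      · rw [show i = Fin.castAdd k2 (i.castLT h) from by simp [Fin.ext_iff], Fin.append_left]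
        exact hc1 _
      · rw [show i = Fin.natAdd k1 ⟨(i : ℕ) - k1, by omega⟩ from by
          simp [Fin.ext_iff]; omega, Fin.append_right]
        exact hc2 _
    · intro i
      rcases lt_or_ge (i : ℕ) k1 with h | h
      · rw [show i = Fin.castAdd k2 (i.castLT h) from by simp [Fin.ext_iff], Fin.append_left]
        exact hg1 _
      · rw [show i = Fin.natAdd k1 ⟨(i : ℕ) - k1, by omega⟩ from by
          simp [Fin.ext_iff]; omega, Fin.append_right]
        exact hg2 _
    · rw [Fin.sum_univ_add]
      congr 1
      · exact Finset.sum_congr rfl fun i _ => by rw [Fin.append_left, Fin.append_left]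
      · exact Finset.sum_congr rfl fun i _ => by rw [Fin.append_right, Fin.append_right]
  refine ⟨⟨0, hzero⟩, ?_, hsmul⟩
  intro x hx y hy a b ha hb hab
  exact hadd _ (hsmul a ha x hx) _ (hsmul b hb y hy)

lemma mpup_isConvexProcess {n : ℕ} (D : Set ((Fin n → ℝ) × (Fin n → ℝ))) :
    IsConvexProcess (mpup D) := coneHull_isConvexCone D

lemma subset_coneHull {n : ℕ} (D : Set ((Fin n → ℝ) × (Fin n → ℝ))) : D ⊆ coneHull D := by
  intro p hp
  exact ⟨1, fun _ => 1, fun _ => p, fun _ => zero_le_one, fun _ => hp, by simp⟩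

lemma coneHull_subset {n : ℕ} {D C : Set ((Fin n → ℝ) × (Fin n → ℝ))}
    (hDC : D ⊆ C) (hC : IsConvexCone C) : coneHull D ⊆ C := by
  rintro x ⟨k, co, g, hco, hg, rfl⟩
  refine Finset.sum_induction _ (· ∈ C) (fun a b ha hb => cc_add hC ha hb) (cc_zero hC) ?_
  intro i _
  exact hC.2.2 (co i) (hco i) (g i) (hDC (hg i))

end Main

/-- Theorem 3: if `dom H_D + R_-(H_D) = ℝ^n`, then `H_D` is reachable iff every
convex process consistent with the data `D` is reachable. -/
theorem stmt2 {n : ℕ} (D : Set ((Fin n → ℝ) × (Fin n → ℝ))) (hD : D.Finite)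
    (hdom : domOf (mpup D) + reachSet (Lminus (mpup D)) = Set.univ) :
    IsReachable (mpup D) ↔
      ∀ H : SVMap n, IsConvexProcess H → D ⊆ graphOf H → IsReachable H := by
  constructor
  · intro hr H hcp hsub
    have huniv : reachSet (mpup D) = Set.univ :=
      key_reach (mpup D) (mpup_isConvexProcess D) hdom hr
    intro ξ _
    have h1 : ξ ∈ reachSet (mpup D) := by rw [huniv]; exact Set.mem_univ ξ
    exact reachSet_mono (show graphOf (mpup D) ⊆ graphOf H from coneHull_subset hsub hcp) h1
  · intro h
    exact h (mpup D) (mpup_isConvexProcess D) (fun p hp => subset_coneHull D hp)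
end

section
/- Let D be a finite subset of ℝ^n × ℝ^n and suppose that dom H_D + R_-(H_D) = ℝ^n and R_+(H_D) = im H_D + N_-(H_D) = ℝ^n, where R_-(H_D), R_+(H_D) are the reachable sets of the minimal and maximal linear processes associated with H_D and N_-(H_D) is the null-controllable set of the minimal linear process associated with H_D. Then H_D is null-controllable if and only if every convex process H ∈ Σ_D is null-controllable. -/
open Matrix Set Pointwise

variable {V : Type*} [AddCommGroup V] [Module ℝ V]

theorem isConvexCone_zero_mem {C : Set V} (h : IsConvexCone C) : (0 : V) ∈ C := by
  obtain ⟨⟨x, hx⟩, -, hs⟩ := h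
  simpa using hs 0 le_rfl x hx

theorem isConvexCone_smul_mem {C : Set V} (h : IsConvexCone C) {c : ℝ} (hc : 0 ≤ c)
    {x : V} (hx : x ∈ C) : c • x ∈ C := h.2.2 c hc x hx

theorem isConvexCone_add_mem {C : Set V} (h : IsConvexCone C) {a b : V}
    (ha : a ∈ C) (hb : b ∈ C) : a + b ∈ C := by
  obtain ⟨-, hconv, hs⟩ := h
  have h2 : (1/2 : ℝ) • a + (1/2 : ℝ) • b ∈ C :=
    hconv ha hb (by norm_num) (by norm_num) (by norm_num)
  have h3 := hs 2 (by norm_num) _ h2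
  have h4 : (2:ℝ) • ((1/2 : ℝ) • a + (1/2 : ℝ) • b) = a + b := by
    rw [smul_add, smul_smul, smul_smul]; norm_num
  rwa [h4] at h3

theorem mem_coneHull_self {S : Set V} {x : V} (hx : x ∈ S) : x ∈ coneHull S :=
  ⟨1, fun _ => 1, fun _ => x, fun _ => zero_le_one, fun _ => hx, by simp⟩

theorem zero_mem_coneHull (S : Set V) : (0 : V) ∈ coneHull S :=
  ⟨0, Fin.elim0, Fin.elim0, fun i => i.elim0, fun i => i.elim0, by simp⟩

theorem smul_mem_coneHull {S : Set V} {c : ℝ} (hc : 0 ≤ c) {x : V} (hx : x ∈ coneHull S) :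
    c • x ∈ coneHull S := by
  obtain ⟨k, co, f, hco, hf, rfl⟩ := hx
  refine ⟨k, fun i => c * co i, f, fun i => mul_nonneg hc (hco i), hf, ?_⟩
  rw [Finset.smul_sum]
  simp [smul_smul]

theorem add_mem_coneHull {S : Set V} {x y : V} (hx : x ∈ coneHull S) (hy : y ∈ coneHull S) :
    x + y ∈ coneHull S := by
  obtain ⟨k₁, c₁, f₁, h₁, g₁, rfl⟩ := hx
  obtain ⟨k₂, c₂, f₂, h₂, g₂, rfl⟩ := hy
  refine ⟨k₁ + k₂, Fin.append c₁ c₂, Fin.append f₁ f₂, ?_, ?_, ?_⟩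
  · intro i
    refine Fin.addCases (fun j => ?_) (fun j => ?_) i
    · simpa [Fin.append_left] using h₁ j
    · simpa [Fin.append_right] using h₂ j
  · intro i
    refine Fin.addCases (fun j => ?_) (fun j => ?_) i
    · simpa [Fin.append_left] using g₁ j
    · simpa [Fin.append_right] using g₂ j
  · rw [Fin.sum_univ_add]
    simp [Fin.append_left, Fin.append_right]

theorem coneHull_isConvexCone_s3 (S : Set V) : IsConvexCone (coneHull S) := by
  refine ⟨⟨0, zero_mem_coneHull S⟩, ?_, fun c hc x hx => smul_mem_coneHull hc hx⟩
  intro x hx y hy a b ha hb _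
  exact add_mem_coneHull (smul_mem_coneHull ha hx) (smul_mem_coneHull hb hy)

theorem coneHull_subset_s3 {S C : Set V} (hC : IsConvexCone C) (hSC : S ⊆ C) :
    coneHull S ⊆ C := by
  rintro x ⟨k, c, f, hc, hf, rfl⟩
  exact Finset.sum_induction _ (· ∈ C) (fun a b ha hb => isConvexCone_add_mem hC ha hb)
    (isConvexCone_zero_mem hC) (fun i _ => isConvexCone_smul_mem hC (hc i) (hSC (hf i)))




/-- reachability in exactly `q` steps along a relation `W` -/
def RInE {n : ℕ} (W : Set ((Fin n → ℝ) × (Fin n → ℝ))) (q : ℕ) (v : Fin n → ℝ) : Prop :=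
  ∃ z : ℕ → (Fin n → ℝ), z 0 = 0 ∧ z q = v ∧ ∀ k, k < q → (z k, z (k + 1)) ∈ W

theorem RInE.succ {n : ℕ} {W : Set ((Fin n → ℝ) × (Fin n → ℝ))}
    (h0 : ((0 : Fin n → ℝ), (0 : Fin n → ℝ)) ∈ W) {q : ℕ} {v : Fin n → ℝ}
    (h : RInE W q v) : RInE W (q + 1) v := by
  obtain ⟨z, hz0, hzq, hzs⟩ := h
  refine ⟨fun k => z (k - 1), by simpa using hz0, by simpa using hzq, ?_⟩
  intro k hk
  match k with
  | 0 => simpa [hz0] using h0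
  | (j+1) => simpa using hzs j (by omega)

theorem RInE.mono {n : ℕ} {W : Set ((Fin n → ℝ) × (Fin n → ℝ))}
    (h0 : ((0 : Fin n → ℝ), (0 : Fin n → ℝ)) ∈ W) {q q' : ℕ} {v : Fin n → ℝ}
    (h : q ≤ q') (hr : RInE W q v) : RInE W q' v := by
  induction q', h using Nat.le_induction with
  | base => exact hr
  | succ q'' hq ih => exact ih.succ h0

/-- the set of points reachable in exactly `q` steps along a submodule relation -/
def reachSub {n : ℕ} (WS : Submodule ℝ ((Fin n → ℝ) × (Fin n → ℝ))) (q : ℕ) :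
    Submodule ℝ (Fin n → ℝ) where
  carrier := {v | RInE (WS : Set _) q v}
  zero_mem' := ⟨fun _ => 0, rfl, rfl, fun k _ => by exact WS.zero_mem⟩
  add_mem' := by
    rintro a b ⟨z, hz0, hzq, hzs⟩ ⟨z', hz0', hzq', hzs'⟩
    refine ⟨fun k => z k + z' k, by simp [hz0, hz0'], by simp [hzq, hzq'], ?_⟩
    intro k hk
    have h := WS.add_mem (hzs k hk) (hzs' k hk)
    simpa [Prod.mk_add_mk] using h
  smul_mem' := by
    rintro c a ⟨z, hz0, hzq, hzs⟩
    refine ⟨fun k => c • z k, by simp [hz0], by simp [hzq], ?_⟩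
    intro k hk
    have h := WS.smul_mem c (hzs k hk)
    simpa [Prod.smul_mk] using h

theorem reachSub_mono {n : ℕ} (WS : Submodule ℝ ((Fin n → ℝ) × (Fin n → ℝ))) :
    Monotone (reachSub WS) := by
  apply monotone_nat_of_le_succ
  intro q v hv
  have hv' : RInE (WS : Set ((Fin n → ℝ) × (Fin n → ℝ))) q v := hv
  exact RInE.succ (by exact WS.zero_mem) hv'

theorem exists_uniform_time {n : ℕ} (WS : Submodule ℝ ((Fin n → ℝ) × (Fin n → ℝ))) :
    ∃ m : ℕ, 1 ≤ m ∧ ∀ v, (∃ q, RInE (WS : Set ((Fin n → ℝ) × (Fin n → ℝ))) q v) →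
      RInE (WS : Set ((Fin n → ℝ) × (Fin n → ℝ))) m v := by
  obtain ⟨N, hN⟩ := monotone_stabilizes_iff_noetherian.mpr inferInstance
    ⟨reachSub WS, reachSub_mono WS⟩
  refine ⟨N + 1, by omega, ?_⟩
  rintro v ⟨q, hq⟩
  have h0 : ((0 : Fin n → ℝ), (0 : Fin n → ℝ)) ∈ (WS : Set ((Fin n → ℝ) × (Fin n → ℝ))) := by exact WS.zero_mem
  rcases le_or_gt q (N + 1) with h | h
  · exact RInE.mono h0 h hq
  · have h1 : (⟨reachSub WS, reachSub_mono WS⟩ : ℕ →o _) N = reachSub WS q := hN q (by omega)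
    have h2 : (⟨reachSub WS, reachSub_mono WS⟩ : ℕ →o _) N = reachSub WS (N + 1) := hN (N + 1) (by omega)
    have hv : v ∈ reachSub WS q := hq
    rw [← h1, h2] at hv
    exact hv


theorem stmt3_main_transfer {n : ℕ} (D : Set ((Fin n → ℝ) × (Fin n → ℝ)))
    (hdom : domOf (mpup D) + reachSet (Lminus (mpup D)) = Set.univ)
    (hnc : IsNullControllable (mpup D))
    (H : SVMap n) (hH : IsConvexProcess H) (hDH : D ⊆ graphOf H) :
    IsNullControllable H := by
  classical
  have hcone : IsConvexCone (coneHull D) := coneHull_isConvexCone_s3 D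
  have hCH : coneHull D ⊆ graphOf H := coneHull_subset_s3 hH hDH
  -- the graph of the minimal linear process, as a submodule
  set W : Set ((Fin n → ℝ) × (Fin n → ℝ)) := (-(coneHull D)) ∩ coneHull D with hWdef
  have hWC : W ⊆ coneHull D := Set.inter_subset_right
  let WS : Submodule ℝ ((Fin n → ℝ) × (Fin n → ℝ)) :=
  { carrier := W
    zero_mem' := ⟨by simpa [Set.mem_neg] using isConvexCone_zero_mem hcone,
      isConvexCone_zero_mem hcone⟩
    add_mem' := by
      rintro a b ⟨ha1, ha2⟩ ⟨hb1, hb2⟩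
      refine ⟨?_, isConvexCone_add_mem hcone ha2 hb2⟩
      rw [Set.mem_neg, neg_add]
      exact isConvexCone_add_mem hcone (Set.mem_neg.mp ha1) (Set.mem_neg.mp hb1)
    smul_mem' := by
      rintro c a ⟨ha1, ha2⟩
      rcases le_or_gt 0 c with hc | hc
      · refine ⟨?_, isConvexCone_smul_mem hcone hc ha2⟩
        rw [Set.mem_neg, ← smul_neg]
        exact isConvexCone_smul_mem hcone hc (Set.mem_neg.mp ha1)
      · constructor
        · rw [Set.mem_neg, ← neg_smul]
          exact isConvexCone_smul_mem hcone (by linarith) ha2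
        · rw [← neg_smul_neg]
          exact isConvexCone_smul_mem hcone (by linarith) (Set.mem_neg.mp ha1) }
  -- uniform reach time
  obtain ⟨m, hm1, hmu⟩ := exists_uniform_time WS
  have huniv : ∀ v ∈ reachSet (Lminus (mpup D)), RInE W m v := by
    rintro v ⟨q, z, hz0, hzq, hzs⟩
    exact hmu v ⟨q, z, hz0, hzq, fun k hk => hzs k hk⟩
  -- decomposition of any point into a domain point plus a reachable point
  have hdec : ∀ a : Fin n → ℝ, ∃ d e r, (d, e) ∈ coneHull D ∧ RInE W m r ∧ a = d + r := by
    intro a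
    have ha : a ∈ domOf (mpup D) + reachSet (Lminus (mpup D)) := by
      rw [hdom]; exact Set.mem_univ a
    rw [Set.mem_add] at ha
    obtain ⟨d, hd, r, hr, hdr⟩ := ha
    obtain ⟨e, he⟩ := hd
    exact ⟨d, e, r, he, huniv r hr, hdr.symm⟩
  choose Fd Fe Fr hFmem hFr hFsum using hdec
  -- pipeline: every point decomposes as (feasible point) + (element with RInE W m)
  have feas_decomp : ∀ x0 : Fin n → ℝ, ∃ (f : ℕ → Fin n → ℝ) (v : Fin n → ℝ),
      f 0 + v = x0 ∧ RInE W m v ∧ (∀ k, (f k, f (k + 1)) ∈ coneHull D) := by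
    intro x0
    let a : ℕ → Fin n → ℝ := fun k => Nat.rec x0 (fun _ p => Fe p) k
    have haS : ∀ k, a (k + 1) = Fe (a k) := fun _ => rfl
    have hwex : ∀ j : ℕ, RInE W m (-(Fr (a j))) := by
      intro j
      have h1 : Fr (a j) ∈ reachSub WS m := hFr (a j)
      exact (reachSub WS m).neg_mem h1
    choose w hw0 hwm hws using hwex
    let c : ℕ → Fin n → ℝ := fun t => ∑ i ∈ Finset.range m, w (t + m - i) i
    refine ⟨fun t => Fd (a t) + c t, Fr (a 0) - c 0, ?_, ?_, ?_⟩
    · show Fd (a 0) + c 0 + (Fr (a 0) - c 0) = x0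
      conv_rhs => rw [show x0 = a 0 from rfl, hFsum (a 0)]
      abel
    · have h1 : Fr (a 0) ∈ reachSub WS m := hFr (a 0)
      have h2 : c 0 ∈ reachSub WS m := by
        refine Submodule.sum_mem _ ?_
        intro i hi
        have hlt : i < m := Finset.mem_range.mp hi
        have h3 : RInE W i (w (0 + m - i) i) :=
          ⟨w (0 + m - i), hw0 _, rfl, fun k hk => hws _ k (lt_trans hk hlt)⟩
        exact RInE.mono WS.zero_mem (le_of_lt hlt) h3
      exact (reachSub WS m).sub_mem h1 h2
    · intro t
      have hstep : ((Fd (a t) + c t, Fd (a (t + 1)) + c (t + 1)) :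
          (Fin n → ℝ) × (Fin n → ℝ)) =
          (Fd (a t), Fe (a t)) +
            ∑ i ∈ Finset.range m, (w (t + m - i) i, w (t + m - i) (i + 1)) := by
        have hident : ∑ i ∈ Finset.range m, w (t + m - i) (i + 1)
            = (∑ i ∈ Finset.range m, w (t + 1 + m - i) i) + w (t + 1) m := by
          have h1 := Finset.sum_range_succ' (fun i => w (t + 1 + m - i) i) m
          have h2 := Finset.sum_range_succ (fun i => w (t + 1 + m - i) i) m
          have e1 : ∑ i ∈ Finset.range m, w (t + m - i) (i + 1)
              = ∑ i ∈ Finset.range m, w (t + 1 + m - (i + 1)) (i + 1) :=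
            Finset.sum_congr rfl (fun i _ => by
              rw [show t + m - i = t + 1 + m - (i + 1) from by omega])
          rw [e1, ← add_zero (∑ i ∈ Finset.range m, w (t + 1 + m - (i + 1)) (i + 1)),
            ← hw0 (t + 1 + m - 0), ← h1, h2,
            show t + 1 + m - m = t + 1 from by omega]
        have hrr : Fe (a t) = Fd (a (t + 1)) + Fr (a (t + 1)) := by
          rw [← haS t]; exact hFsum (a (t + 1))
        apply Prod.ext
        · rw [Prod.fst_add, Prod.fst_sum]
        · rw [Prod.snd_add, Prod.snd_sum]
          show Fd (a (t + 1)) + c (t + 1)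
              = Fe (a t) + ∑ i ∈ Finset.range m, w (t + m - i) (i + 1)
          rw [hident, hwm (t + 1), hrr]
          show Fd (a (t + 1)) + ∑ i ∈ Finset.range m, w (t + 1 + m - i) i = _
          abel
      show ((Fd (a t) + c t, Fd (a (t + 1)) + c (t + 1)) :
          (Fin n → ℝ) × (Fin n → ℝ)) ∈ coneHull D
      rw [hstep]
      refine isConvexCone_add_mem hcone (hFmem (a t)) (hWC ?_)
      exact Submodule.sum_mem WS (fun i hi => hws (t + m - i) i (Finset.mem_range.mp hi))
  -- main argument
  intro ξ hξ
  obtain ⟨x, hx0, hxs⟩ := hξ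
  obtain ⟨f, v, hfv, hvR, hfs⟩ := feas_decomp (x m)
  have hffeas : f 0 ∈ feasSet (mpup D) := ⟨f, rfl, fun k => hfs k⟩
  obtain ⟨q, tt, ht0, htq, hts⟩ := hnc hffeas
  have hnegv : RInE W m (-v) := by
    have h1 : v ∈ reachSub WS m := hvR
    exact (reachSub WS m).neg_mem h1
  obtain ⟨z, hz0, hzm, hzs⟩ := hnegv
  refine ⟨m + q, fun k => if k < m then x k + z k else tt (k - m), ?_, ?_, ?_⟩
  · simp only [if_pos (by omega : 0 < m)]
    rw [hx0, hz0, add_zero]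
  · simp only [if_neg (by omega : ¬ (m + q < m))]
    rw [show m + q - m = q by omega, htq]
  · intro k hk
    have hpair : ∀ j, j < m → (x j + z j, x (j + 1) + z (j + 1)) ∈ graphOf H := by
      intro j hj
      have h1 : (x j, x (j + 1)) ∈ graphOf H := hxs j
      have h2 : (z j, z (j + 1)) ∈ graphOf H := hCH (hWC (hzs j hj))
      have h3 := isConvexCone_add_mem hH h1 h2
      simpa [Prod.mk_add_mk] using h3
    rcases lt_or_ge (k + 1) m with h1 | h1
    · simp only [if_pos (by omega : k < m), if_pos h1]
      exact hpair k (by omega)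
    · rcases eq_or_lt_of_le h1 with h2 | h2
      · -- k + 1 = m
        simp only [if_pos (by omega : k < m), if_neg (by omega : ¬ (k + 1 < m))]
        rw [show k + 1 - m = 0 by omega, ht0]
        have hfe : f 0 = x m + z m := by
          rw [hzm, ← hfv]; abel
        rw [hfe, h2]
        exact hpair k (by omega)
      · -- k ≥ m, k + 1 > m
        simp only [if_neg (by omega : ¬ (k < m)), if_neg (by omega : ¬ (k + 1 < m))]
        rw [show k + 1 - m = (k - m) + 1 by omega]
        have h3 : (tt (k - m), tt (k - m + 1)) ∈ coneHull D := hts (k - m) (by omega)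
        exact hCH h3

/-- Theorem 4: if `dom H_D + R_-(H_D) = ℝ^n` and `R_+(H_D) = im H_D + N_-(H_D) = ℝ^n`,
then `H_D` is null-controllable iff every convex process consistent with the data `D`
is null-controllable. -/
theorem stmt3 {n : ℕ} (D : Set ((Fin n → ℝ) × (Fin n → ℝ))) (hD : D.Finite)
    (hdom : domOf (mpup D) + reachSet (Lminus (mpup D)) = Set.univ)
    (hRp : reachSet (Lplus (mpup D)) = Set.univ)
    (him : imOf (mpup D) + nullSet (Lminus (mpup D)) = Set.univ) :
    IsNullControllable (mpup D) ↔
      ∀ H : SVMap n, IsConvexProcess H → D ⊆ graphOf H → IsNullControllable H := by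
  constructor
  · intro hnc H hHcp hDH
    exact stmt3_main_transfer D hdom hnc H hHcp hDH
  · intro hall
    refine hall (mpup D) ?_ ?_
    · show IsConvexCone (graphOf (mpup D))
      have h : graphOf (mpup D) = coneHull D := rfl
      rw [h]
      exact coneHull_isConvexCone_s3 D
    · intro d hd
      show d ∈ graphOf (mpup D)
      have h : graphOf (mpup D) = coneHull D := rfl
      rw [h]
      exact mem_coneHull_self hd
end

section
/- Let D = {(x_t,y_t) : t = 1,…,T} ⊆ ℝ^n × ℝ^n be a finite set with associated matrices X, Y ∈ ℝ^{n×T} and Z, W ∈ ℝ^{ℓ×n}. Then for every set S ⊆ ℝ^n, the images of S under the minimal and maximal linear processes associated with H_D satisfy L_-(H_D)(S) = W^{-1}(ZS) = {y : ∃x ∈ S with Wy = Zx} and L_+(H_D)(S) = Y(X^{-1}S) = {Yv : v ∈ ℝ^T, Xv ∈ S}. -/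
open Matrix Set Pointwise

section AuxProofs
open scoped RealInnerProductSpace

variable {V : Type*} [AddCommGroup V] [Module ℝ V]

lemma aux_subset_coneHull (S : Set V) : S ⊆ coneHull S := by
  intro x hx
  exact ⟨1, fun _ => 1, fun _ => x, fun _ => zero_le_one, fun _ => hx, by simp⟩

lemma aux_coneHull_range {k : ℕ} (g : Fin k → V) :
    coneHull (Set.range g) = {x | ∃ c : Fin k → ℝ, (∀ i, 0 ≤ c i) ∧ x = ∑ i, c i • g i} := by
  ext x
  constructor
  · rintro ⟨j, c, f, hc, hf, rfl⟩
    choose σ hσ using hf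
    classical
    refine ⟨fun t => ∑ i ∈ Finset.univ.filter (fun i => σ i = t), c i, ?_, ?_⟩
    · intro t; exact Finset.sum_nonneg fun i _ => hc i
    · rw [← Finset.sum_fiberwise Finset.univ σ (fun i => c i • f i)]
      refine Finset.sum_congr rfl fun t _ => ?_
      rw [Finset.sum_smul]
      refine Finset.sum_congr rfl fun i hi => ?_
      rw [Finset.mem_filter] at hi
      rw [← hσ i, hi.2]
  · rintro ⟨c, hc, rfl⟩
    exact ⟨k, c, g, hc, fun i => ⟨i, rfl⟩, rfl⟩

lemma aux_sum_extend {k : ℕ} (c : Fin k → ℝ) (F : Fin k → V) (D : Fin k → ℝ)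
    (hD0 : ∀ i, c i = 0 → D i = 0) :
    ∑ i, D i • F i = ∑ i : {i // c i ≠ 0}, D i.1 • F i.1 := by
  classical
  rw [← Finset.sum_subtype (Finset.univ.filter (fun i => c i ≠ 0))
    (by simp) (fun i => D i • F i)]
  refine (Finset.sum_subset (Finset.subset_univ _) ?_).symm
  intro i _ hi
  simp only [Finset.mem_filter, Finset.mem_univ, true_and, not_not] at hi
  simp [hD0 i hi]

lemma aux_carath {k : ℕ} (g : Fin k → V) :
    ∀ (N : ℕ) (c : Fin k → ℝ), (Finset.univ.filter (fun i => c i ≠ 0)).card ≤ N →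
    (∀ i, 0 ≤ c i) →
    ∃ c' : Fin k → ℝ, (∀ i, 0 ≤ c' i) ∧ ∑ i, c' i • g i = ∑ i, c i • g i ∧
      LinearIndependent ℝ (fun i : {i // c' i ≠ 0} => g i.1) := by
  classical
  intro N
  induction N with
  | zero =>
    intro c hcard hc
    refine ⟨c, hc, rfl, ?_⟩
    have hz : ∀ i, c i = 0 := by
      intro i
      by_contra h
      have hmem : i ∈ Finset.univ.filter (fun i => c i ≠ 0) := by simp [h]
      have := Finset.card_pos.2 ⟨i, hmem⟩
      omega
    have : IsEmpty {i // c i ≠ 0} := ⟨fun i => i.2 (hz i.1)⟩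
    exact linearIndependent_empty_type
  | succ N ih =>
    intro c hcard hc
    by_cases hli : LinearIndependent ℝ (fun i : {i // c i ≠ 0} => g i.1)
    · exact ⟨c, hc, rfl, hli⟩
    · obtain ⟨d, hd0, j0, hj0⟩ := Fintype.not_linearIndependent_iff.1 hli
      have key : ∀ d : {i // c i ≠ 0} → ℝ, (∑ i, d i • g i.1 = 0) → (∃ j, 0 < d j) →
          ∃ c' : Fin k → ℝ, (∀ i, 0 ≤ c' i) ∧ ∑ i, c' i • g i = ∑ i, c i • g i ∧
            LinearIndependent ℝ (fun i : {i // c' i ≠ 0} => g i.1) := by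
        intro d hd0 ⟨j, hj⟩
        set D : Fin k → ℝ := fun i => if h : c i ≠ 0 then d ⟨i, h⟩ else 0 with hD
        have hDz : ∀ i, c i = 0 → D i = 0 := fun i hi => by simp [hD, hi]
        have hDd : ∀ i : {i // c i ≠ 0}, D i.1 = d i := fun i => by simp [hD, i.2]
        have hDsum : ∑ i, D i • g i = 0 := by
          rw [aux_sum_extend c g D hDz]
          rw [← hd0]
          exact Finset.sum_congr rfl fun i _ => by rw [hDd]
        have hPne : (Finset.univ.filter (fun i => 0 < D i)).Nonempty :=
          ⟨j.1, by simp only [Finset.mem_filter, Finset.mem_univ, true_and]; rw [hDd j]; exact hj⟩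
        obtain ⟨i0, hi0mem, hi0min⟩ := Finset.exists_min_image
          (Finset.univ.filter (fun i => 0 < D i)) (fun i => c i / D i) hPne
        simp only [Finset.mem_filter, Finset.mem_univ, true_and] at hi0mem
        set t : ℝ := c i0 / D i0 with ht
        have ht0 : 0 ≤ t := div_nonneg (hc i0) hi0mem.le
        set c' : Fin k → ℝ := fun i => c i - t * D i with hc'
        have hc'0 : ∀ i, 0 ≤ c' i := by
          intro i
          by_cases hDi : 0 < D i
          · have h1 : t ≤ c i / D i := hi0min i (by simp [hDi])
            have h2 : t * D i ≤ c i := (le_div_iff₀ hDi).1 h1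
            simp only [hc']
            linarith
          · push_neg at hDi
            have : t * D i ≤ 0 := mul_nonpos_of_nonneg_of_nonpos ht0 hDi
            simp only [hc']
            linarith [hc i]
        have hc'sum : ∑ i, c' i • g i = ∑ i, c i • g i := by
          simp only [hc', sub_smul, Finset.sum_sub_distrib, mul_smul]
          rw [← Finset.smul_sum, hDsum, smul_zero, sub_zero]
        have hsub : Finset.univ.filter (fun i => c' i ≠ 0) ⊂
            Finset.univ.filter (fun i => c i ≠ 0) := by
          constructor
          · intro i hi
            simp only [Finset.mem_filter, Finset.mem_univ, true_and] at hi ⊢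
            intro hci
            exact hi (by simp [hc', hci, hDz i hci])
          · intro hsup
            have hi0 : i0 ∈ Finset.univ.filter (fun i => c i ≠ 0) := by
              simp only [Finset.mem_filter, Finset.mem_univ, true_and]
              intro h
              rw [hDz i0 h] at hi0mem
              exact lt_irrefl 0 hi0mem
            have := hsup hi0
            simp only [Finset.mem_filter, Finset.mem_univ, true_and] at this
            apply this
            show c i0 - t * D i0 = 0
            rw [ht, div_mul_cancel₀ _ (ne_of_gt hi0mem), sub_self]
        have hcard' : (Finset.univ.filter (fun i => c' i ≠ 0)).card ≤ N := by
          have := Finset.card_lt_card hsub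
          omega
        obtain ⟨c'', h1, h2, h3⟩ := ih c' hcard' hc'0
        exact ⟨c'', h1, h2.trans hc'sum, h3⟩
      rcases lt_trichotomy (d j0) 0 with h | h | h
      · refine key (-d) ?_ ⟨j0, by simpa using h⟩
        simp only [Pi.neg_apply, neg_smul, Finset.sum_neg_distrib, hd0, neg_zero]
      · exact absurd h hj0
      · exact key d hd0 ⟨j0, h⟩

section AuxClosed
variable {H : Type*} [NormedAddCommGroup H] [NormedSpace ℝ H] [FiniteDimensional ℝ H]

lemma aux_isClosed_coneSet {k : ℕ} (g : Fin k → H) :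
    IsClosed {x : H | ∃ c : Fin k → ℝ, (∀ i, 0 ≤ c i) ∧ x = ∑ i, c i • g i} := by
  classical
  have hset : {x : H | ∃ c : Fin k → ℝ, (∀ i, 0 ≤ c i) ∧ x = ∑ i, c i • g i} =
      ⋃ A ∈ {A : Finset (Fin k) | LinearIndependent ℝ (fun j : ↥A => g j.1)},
        (fun c : (↥A → ℝ) => ∑ j : ↥A, c j • g j.1) '' {c | ∀ j, 0 ≤ c j} := by
    ext x
    simp only [Set.mem_iUnion, Set.mem_setOf_eq, Set.mem_image]
    constructor
    · rintro ⟨c, hc, rfl⟩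
      obtain ⟨c', h1, h2, h3⟩ := aux_carath g (Finset.univ.filter (fun i => c i ≠ 0)).card c
        le_rfl hc
      set A : Finset (Fin k) := Finset.univ.filter (fun i => c' i ≠ 0) with hA
      refine ⟨A, ?_, fun j => c' j.1, fun j => h1 j.1, ?_⟩
      · exact h3.comp (fun j : ↥A => (⟨j.1, (Finset.mem_filter.1 j.2).2⟩ : {i // c' i ≠ 0}))
          (fun a b hab => Subtype.ext (by have h2 := congrArg Subtype.val hab; exact h2))
      · rw [Finset.sum_coe_sort A (fun i => c' i • g i)]
        rw [Finset.sum_subset A.subset_univ (fun i _ hi => by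
          simp only [hA, Finset.mem_filter, Finset.mem_univ, true_and, not_not] at hi
          simp [hi])]
        exact h2
    · rintro ⟨A, hA, c, hc, rfl⟩
      set C : Fin k → ℝ := fun i => if h : i ∈ A then c ⟨i, h⟩ else 0 with hC
      refine ⟨C, fun i => ?_, ?_⟩
      · by_cases h : i ∈ A
        · simp only [hC, dif_pos h]; exact hc ⟨i, h⟩
        · simp [hC, h]
      · rw [← Finset.sum_subset A.subset_univ (fun i _ hi => by simp [hC, hi])]
        rw [← Finset.sum_coe_sort A (fun i => C i • g i)]
        exact Finset.sum_congr rfl fun j _ => by simp [hC, j.2]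
  rw [hset]
  refine Set.Finite.isClosed_biUnion (Set.toFinite _) ?_
  intro A hA
  simp only [Set.mem_setOf_eq] at hA
  set L : (↥A → ℝ) →ₗ[ℝ] H :=
    { toFun := fun c => ∑ j : ↥A, c j • g j.1
      map_add' := fun a b => by simp [add_smul, Finset.sum_add_distrib]
      map_smul' := fun r a => by simp [mul_smul, Finset.smul_sum] } with hL
  have hker : LinearMap.ker L = ⊥ := by
    rw [LinearMap.ker_eq_bot']
    intro c hLc
    funext j
    exact Fintype.linearIndependent_iff.1 hA c hLc j
  have hemb := LinearMap.isClosedEmbedding_of_injective hker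
  have horth : IsClosed {c : ↥A → ℝ | ∀ j, 0 ≤ c j} := by
    have : {c : ↥A → ℝ | ∀ j, 0 ≤ c j} = ⋂ j, {c | 0 ≤ c j} := by ext; simp [Set.mem_iInter]
    rw [this]
    exact isClosed_iInter fun j => isClosed_le continuous_const (continuous_apply j)
  exact hemb.isClosedMap _ horth
end AuxClosed

section AuxFarkas
variable {H : Type*} [NormedAddCommGroup H] [InnerProductSpace ℝ H] [FiniteDimensional ℝ H]

lemma aux_farkas {k : ℕ} (g : Fin k → H) (b : H)
    (hb : ∀ η : H, (∀ i, 0 ≤ ⟪g i, η⟫) → 0 ≤ ⟪b, η⟫) :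
    ∃ c : Fin k → ℝ, (∀ i, 0 ≤ c i) ∧ b = ∑ i, c i • g i := by
  classical
  set C : Set H := {x | ∃ c : Fin k → ℝ, (∀ i, 0 ≤ c i) ∧ x = ∑ i, c i • g i} with hC
  set K : ConvexCone ℝ H :=
    { carrier := C
      smul_mem' := by
        rintro r hr x ⟨c, hc, rfl⟩
        exact ⟨fun i => r * c i, fun i => mul_nonneg hr.le (hc i),
          by simp [Finset.smul_sum, mul_smul]⟩
      add_mem' := by
        rintro x ⟨c, hc, rfl⟩ y ⟨c', hc', rfl⟩
        exact ⟨fun i => c i + c' i, fun i => add_nonneg (hc i) (hc' i),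
          by simp [add_smul, Finset.sum_add_distrib]⟩ } with hK
  by_contra hnb
  have hbK : b ∉ K := hnb
  have hne : (K : Set H).Nonempty := ⟨0, ⟨fun _ => 0, fun _ => le_rfl, by simp⟩⟩
  have hcl : IsClosed (K : Set H) := aux_isClosed_coneSet g
  obtain ⟨y, hy1, hy2⟩ : ∃ y, (∀ x ∈ K, 0 ≤ ⟪x, y⟫) ∧ ⟪y, b⟫ < 0 := by
    let P : ProperCone ℝ H :=
      { carrier := C
        add_mem' := fun ha hb => K.add_mem' ha hb
        zero_mem' := ⟨fun _ => 0, fun _ => le_rfl, by simp⟩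
        smul_mem' := by
          rintro ⟨r, hr⟩ x ⟨c, hc, rfl⟩
          exact ⟨fun i => r * c i, fun i => mul_nonneg hr (hc i),
            by simp [Finset.smul_sum, mul_smul]⟩
        isClosed' := hcl }
    obtain ⟨y, hy1, hy2⟩ := ProperCone.hyperplane_separation' P (x₀ := b) hbK
    exact ⟨y, hy1, by rwa [real_inner_comm]⟩
  have hgK : ∀ i, g i ∈ K := by
    intro i
    refine ⟨fun j => if j = i then 1 else 0, fun j => by positivity, ?_⟩
    simp [ite_smul]
  have := hb y (fun i => hy1 (g i) (hgK i))
  rw [real_inner_comm] at hy2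
  linarith
end AuxFarkas

noncomputable def auxEqvP (n : ℕ) :
    WithLp 2 (EuclideanSpace ℝ (Fin n) × EuclideanSpace ℝ (Fin n)) ≃ₗ[ℝ]
      (Fin n → ℝ) × (Fin n → ℝ) :=
  (WithLp.linearEquiv 2 ℝ _).trans
    ((WithLp.linearEquiv 2 ℝ (Fin n → ℝ)).prodCongr (WithLp.linearEquiv 2 ℝ (Fin n → ℝ)))

lemma aux_inner_eqvP {n : ℕ} (p q : (Fin n → ℝ) × (Fin n → ℝ)) :
    ⟪(auxEqvP n).symm p, (auxEqvP n).symm q⟫ = pairDot p q := by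
  simp only [WithLp.prod_inner_apply, PiLp.inner_apply, RCLike.inner_apply, pairDot,
    dotProduct, auxEqvP, LinearEquiv.trans_symm, LinearEquiv.trans_apply,
    LinearEquiv.prodCongr_symm, LinearEquiv.prodCongr_apply, WithLp.linearEquiv_symm_apply,
    starRingEnd_apply, star_trivial]
  refine congrArg₂ (· + ·) (Finset.sum_congr rfl fun i _ => ?_)
    (Finset.sum_congr rfl fun i _ => ?_) <;> exact mul_comm _ _

lemma aux_farkasP {n k : ℕ} (g : Fin k → ((Fin n → ℝ) × (Fin n → ℝ)))
    (b : (Fin n → ℝ) × (Fin n → ℝ))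
    (hb : ∀ η, (∀ i, 0 ≤ pairDot (g i) η) → 0 ≤ pairDot b η) :
    ∃ c : Fin k → ℝ, (∀ i, 0 ≤ c i) ∧ b = ∑ i, c i • g i := by
  have key : ∀ (p : (Fin n → ℝ) × (Fin n → ℝ))
      (η : WithLp 2 (EuclideanSpace ℝ (Fin n) × EuclideanSpace ℝ (Fin n))),
      ⟪(auxEqvP n).symm p, η⟫ = pairDot p ((auxEqvP n) η) := by
    intro p η
    conv_lhs => rw [show η = (auxEqvP n).symm ((auxEqvP n) η) from
      ((auxEqvP n).symm_apply_apply η).symm]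
    exact aux_inner_eqvP p ((auxEqvP n) η)
  have harg : ∀ η, (∀ i, 0 ≤ ⟪(auxEqvP n).symm (g i), η⟫) → 0 ≤ ⟪(auxEqvP n).symm b, η⟫ := by
    intro η hη
    rw [key]
    apply hb
    intro i
    rw [← key]
    exact hη i
  obtain ⟨c, hc, hsum⟩ := aux_farkas (fun i => (auxEqvP n).symm (g i)) ((auxEqvP n).symm b) harg
  refine ⟨c, hc, ?_⟩
  have h2 := congrArg (auxEqvP n) hsum
  simpa [map_sum, _root_.map_smul, LinearEquiv.apply_symm_apply] using h2

end AuxProofs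

section MainAux

lemma aux_graphOf_ofGraph {n : ℕ} (G : Set ((Fin n → ℝ) × (Fin n → ℝ))) :
    graphOf (ofGraph G) = G := by
  ext p; simp [graphOf, ofGraph]

lemma aux_pairDot_sum_left {n k : ℕ} (c : Fin k → ℝ) (f : Fin k → ((Fin n → ℝ) × (Fin n → ℝ)))
    (η : (Fin n → ℝ) × (Fin n → ℝ)) :
    pairDot (∑ i, c i • f i) η = ∑ i, c i * pairDot (f i) η := by
  let φ : ((Fin n → ℝ) × (Fin n → ℝ)) →ₗ[ℝ] ℝ :=
    { toFun := fun p => pairDot p η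
      map_add' := fun a b => by
        simp only [pairDot, Prod.fst_add, Prod.snd_add, add_dotProduct]; ring
      map_smul' := fun r a => by
        simp only [pairDot, Prod.smul_fst, Prod.smul_snd, smul_dotProduct,
          smul_eq_mul, RingHom.id_apply]; ring }
  show φ (∑ i, c i • f i) = _
  rw [map_sum]
  exact Finset.sum_congr rfl fun i _ => by rw [LinearMap.map_smul]; rfl

lemma aux_pairDot_sum_right {n k : ℕ} (c : Fin k → ℝ) (f : Fin k → ((Fin n → ℝ) × (Fin n → ℝ)))
    (b : (Fin n → ℝ) × (Fin n → ℝ)) :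
    pairDot b (∑ i, c i • f i) = ∑ i, c i * pairDot b (f i) := by
  let φ : ((Fin n → ℝ) × (Fin n → ℝ)) →ₗ[ℝ] ℝ :=
    { toFun := fun p => pairDot b p
      map_add' := fun a c => by
        simp only [pairDot, Prod.fst_add, Prod.snd_add, dotProduct_add]; ring
      map_smul' := fun r a => by
        simp only [pairDot, Prod.smul_fst, Prod.smul_snd, dotProduct_smul,
          smul_eq_mul, RingHom.id_apply]; ring }
  show φ (∑ i, c i • f i) = _
  rw [map_sum]
  exact Finset.sum_congr rfl fun i _ => by rw [LinearMap.map_smul]; rfl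

lemma aux_pairDot_neg_left {n : ℕ} (p η : (Fin n → ℝ) × (Fin n → ℝ)) :
    pairDot (-p) η = -pairDot p η := by
  simp only [pairDot, Prod.fst_neg, Prod.snd_neg, neg_dotProduct]; ring

lemma aux_sum_cols {n T : ℕ} (X Y : Matrix (Fin n) (Fin T) ℝ) (v : Fin T → ℝ) :
    ∑ t, v t • (((fun i => X i t), fun i => Y i t) : (Fin n → ℝ) × (Fin n → ℝ))
      = (X *ᵥ v, Y *ᵥ v) := by
  refine Prod.ext ?_ ?_
  · simp only [Prod.fst_sum, Prod.smul_fst]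
    funext i
    simp [Matrix.mulVec, dotProduct, Finset.sum_apply, mul_comm]
  · simp only [Prod.snd_sum, Prod.smul_snd]
    funext i
    simp [Matrix.mulVec, dotProduct, Finset.sum_apply, mul_comm]

lemma aux_coneHull_colPairs {n T : ℕ} (X Y : Matrix (Fin n) (Fin T) ℝ) :
    coneHull (colPairs X Y) = {p : (Fin n → ℝ) × (Fin n → ℝ) |
      ∃ v : Fin T → ℝ, (∀ t, 0 ≤ v t) ∧ p = (X *ᵥ v, Y *ᵥ v)} := by
  have h1 : colPairs X Y =
      Set.range (fun t => (((fun i => X i t), fun i => Y i t) : (Fin n → ℝ) × (Fin n → ℝ))) := by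
    ext p; simp [colPairs, Set.range, eq_comm]
  rw [h1, aux_coneHull_range]
  ext p
  constructor
  · rintro ⟨c, hc, rfl⟩
    exact ⟨c, hc, (aux_sum_cols X Y c)⟩
  · rintro ⟨v, hv, rfl⟩
    exact ⟨v, hv, (aux_sum_cols X Y v).symm⟩

lemma aux_pairDot_row {n m : ℕ} (Z W : Matrix (Fin m) (Fin n) ℝ) (x y : Fin n → ℝ) (i : Fin m) :
    pairDot (x, y) (((fun j => Z i j), fun j => -W i j) : (Fin n → ℝ) × (Fin n → ℝ))
      = (Z *ᵥ x) i - (W *ᵥ y) i := by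
  simp only [pairDot, Matrix.mulVec, dotProduct]
  rw [Finset.sum_congr rfl (fun j _ => mul_comm (x j) (Z i j)),
    sub_eq_add_neg, ← Finset.sum_neg_distrib]
  congr 1
  exact Finset.sum_congr rfl fun j _ => by ring

lemma aux_lin_char {n T m : ℕ} (X Y : Matrix (Fin n) (Fin T) ℝ)
    (Z W : Matrix (Fin m) (Fin n) ℝ)
    (hZW : polarPos (colPairs X Y) = coneHull (rowPairsZW Z W)) (x y : Fin n → ℝ) :
    (x, y) ∈ (-(coneHull (colPairs X Y))) ∩ coneHull (colPairs X Y) ↔ W *ᵥ y = Z *ᵥ x := by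
  have hmono : ∀ p ∈ coneHull (colPairs X Y), ∀ η ∈ polarPos (colPairs X Y),
      0 ≤ pairDot p η := by
    rintro p ⟨k, c, f, hc, hf, rfl⟩ η hη
    rw [aux_pairDot_sum_left]
    exact Finset.sum_nonneg fun i _ => mul_nonneg (hc i) (hη (f i) (hf i))
  have hρ : ∀ i : Fin m,
      (((fun j => Z i j), fun j => -W i j) : (Fin n → ℝ) × (Fin n → ℝ))
        ∈ polarPos (colPairs X Y) := by
    intro i
    rw [hZW]
    exact aux_subset_coneHull _ ⟨i, rfl⟩
  constructor
  · rintro ⟨hneg, hpos⟩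
    funext i
    have ha := hmono _ hpos _ (hρ i)
    have hb := hmono _ (Set.mem_neg.1 hneg) _ (hρ i)
    rw [aux_pairDot_neg_left] at hb
    rw [aux_pairDot_row] at ha hb
    have : (Z *ᵥ x) i - (W *ᵥ y) i = 0 := le_antisymm (by linarith) ha
    linarith
  · intro h
    have hdot0 : ∀ η ∈ coneHull (rowPairsZW Z W), pairDot (x, y) η = 0 := by
      rintro η ⟨k, c, f, hc, hf, rfl⟩
      rw [aux_pairDot_sum_right]
      refine Finset.sum_eq_zero fun i _ => ?_
      obtain ⟨j, hfj⟩ := hf i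
      rw [hfj, aux_pairDot_row, ← h, sub_self, mul_zero]
    have hmem : ∀ b : (Fin n → ℝ) × (Fin n → ℝ),
        (∀ η ∈ coneHull (rowPairsZW Z W), pairDot b η = 0) →
        b ∈ coneHull (colPairs X Y) := by
      intro b hb0
      have harg : ∀ η, (∀ t : Fin T,
          0 ≤ pairDot (((fun i => X i t), fun i => Y i t) : (Fin n → ℝ) × (Fin n → ℝ)) η) →
          0 ≤ pairDot b η := by
        intro η hη
        have hpol : η ∈ polarPos (colPairs X Y) := by
          rintro d ⟨t, rfl⟩
          exact hη t
        rw [hZW] at hpol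
        rw [hb0 η hpol]
      obtain ⟨c, hc, hbsum⟩ := aux_farkasP
        (fun t => (((fun i => X i t), fun i => Y i t) : (Fin n → ℝ) × (Fin n → ℝ))) b harg
      exact ⟨T, c, _, hc, fun t => ⟨t, rfl⟩, hbsum⟩
    refine ⟨Set.mem_neg.2 (hmem _ ?_), hmem _ hdot0⟩
    intro η hη
    rw [aux_pairDot_neg_left, hdot0 η hη, neg_zero]

lemma aux_max_sub {v : ℝ} : max v 0 - max (-v) 0 = v := by
  rcases le_total v 0 with h | h
  · rw [max_eq_right h, max_eq_left (by linarith)]; ring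
  · rw [max_eq_left h, max_eq_right (by linarith)]; ring

end MainAux


/-- Images of a set under the minimal and maximal linear processes of `H_D`:
`L_-(H_D)(S) = W^{-1}(Z S)` and `L_+(H_D)(S) = Y(X^{-1} S)`. -/
theorem stmt10 {n T m : ℕ} (X Y : Matrix (Fin n) (Fin T) ℝ) (Z W : Matrix (Fin m) (Fin n) ℝ)
    (hZW : polarPos (colPairs X Y) = coneHull (rowPairsZW Z W)) :
    ∀ S : Set (Fin n → ℝ),
      imageSV (Lminus (mpup (colPairs X Y))) S = mapWiZ Z W S ∧
      imageSV (Lplus (mpup (colPairs X Y))) S = mapYXi X Y S := by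
  intro S
  have hG : graphOf (mpup (colPairs X Y)) = coneHull (colPairs X Y) :=
    aux_graphOf_ofGraph _
  constructor
  · ext y
    simp only [imageSV, mapWiZ, Lminus, ofGraph, Set.mem_setOf_eq, hG]
    constructor
    · rintro ⟨x, hxS, hy⟩
      exact ⟨x, hxS, (aux_lin_char X Y Z W hZW x y).1 hy⟩
    · rintro ⟨x, hxS, h⟩
      exact ⟨x, hxS, (aux_lin_char X Y Z W hZW x y).2 h⟩
  · ext y
    simp only [imageSV, mapYXi, Lplus, ofGraph, Set.mem_setOf_eq, hG]
    constructor
    · rintro ⟨x, hxS, hy⟩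
      rw [Set.mem_sub] at hy
      obtain ⟨a, ha, b, hb, hab⟩ := hy
      rw [aux_coneHull_colPairs] at ha hb
      obtain ⟨v1, hv1, rfl⟩ := ha
      obtain ⟨v2, hv2, rfl⟩ := hb
      have hfst := congrArg Prod.fst hab
      have hsnd := congrArg Prod.snd hab
      simp only [Prod.fst_sub, Prod.snd_sub] at hfst hsnd
      refine ⟨v1 - v2, ?_, ?_⟩
      · have hx : X *ᵥ (v1 - v2) = x := by rw [Matrix.mulVec_sub]; exact hfst
        rw [hx]; exact hxS
      · rw [Matrix.mulVec_sub]; exact hsnd.symm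
    · rintro ⟨v, hXv, rfl⟩
      refine ⟨X *ᵥ v, hXv, ?_⟩
      rw [Set.mem_sub]
      refine ⟨(X *ᵥ (fun t => max (v t) 0), Y *ᵥ (fun t => max (v t) 0)), ?_,
        (X *ᵥ (fun t => max (-v t) 0), Y *ᵥ (fun t => max (-v t) 0)), ?_, ?_⟩
      · rw [aux_coneHull_colPairs]
        exact ⟨_, fun t => le_max_right _ _, rfl⟩
      · rw [aux_coneHull_colPairs]
        exact ⟨_, fun t => le_max_right _ _, rfl⟩
      · have hv : (fun t => max (v t) 0) - (fun t => max (-v t) 0) = v := by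
          funext t
          exact aux_max_sub
        refine Prod.ext ?_ ?_
        · show X *ᵥ _ - X *ᵥ _ = X *ᵥ v
          rw [← Matrix.mulVec_sub, hv]
        · show Y *ᵥ _ - Y *ᵥ _ = Y *ᵥ v
          rw [← Matrix.mulVec_sub, hv]
end
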